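/- For any elementary existential doctrine P : C^op → InfSL, the data of Definition 'exact completion of P' form a category T_P: composition of arrows φ : ⟨A,ρ⟩ → ⟨B,σ⟩ and ψ : ⟨B,σ⟩ → ⟨C,τ⟩ given by ∃_{p2}(P_{⟨p1,p2⟩}(φ) ∧ P_{⟨p2,p3⟩}(ψ)) is a well-defined arrow ⟨A,ρ⟩ → ⟨C,τ⟩, is associative, and ρ itself is the identity arrow on ⟨A,ρ⟩. -/

import Mathlib

open CategoryTheory CategoryTheory.Limits

universe u v w

/-- Layer 0: an indexed family of inf-semilattices over a category. -/
structure DocL0 (C : Type u) [Category.{v} C] where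
  obj : C → Type w
  semi : ∀ A : C, SemilatticeInf (obj A)

attribute [instance] DocL0.semi

/-- Layer 1: fibrewise top elements. -/
structure DocL1 (C : Type u) [Category.{v} C] extends DocL0.{u, v, w} C where
  otop : ∀ A : C, OrderTop (obj A)

attribute [instance] DocL1.otop

/-- A doctrine: an indexed inf-semilattice `P : Cᵒᵖ → InfSL`. -/
structure Doctrine (C : Type u) [Category.{v} C] extends DocL1.{u, v, w} C where
  map : ∀ {A B : C}, (A ⟶ B) → obj B → obj A
  map_id : ∀ (A : C) (x : obj A), map (𝟙 A) x = x
  map_comp : ∀ {A B D : C} (f : A ⟶ B) (g : B ⟶ D) (x : obj D),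
    map (f ≫ g) x = map f (map g x)
  map_mono : ∀ {A B : C} (f : A ⟶ B), Monotone (map f)
  map_inf : ∀ {A B : C} (f : A ⟶ B) (x y : obj B),
    map f (x ⊓ y) = map f x ⊓ map f y
  map_top : ∀ {A B : C} (f : A ⟶ B), map f (⊤ : obj B) = (⊤ : obj A)

/-- An elementary existential doctrine. -/
structure EED (C : Type u) [Category.{v} C] [HasBinaryProducts C] extends
    Doctrine.{u, v, w} C where
  delta : ∀ A : C, obj (A ⨯ A)
  elem_i : ∀ {A : C} (α : obj A) (β : obj (A ⨯ A)),
    map prod.fst α ⊓ delta A ≤ β ↔ α ≤ map (diag A) β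
  elem_ii : ∀ {X A : C} (α : obj (X ⨯ A)) (β : obj ((X ⨯ A) ⨯ A)),
    map prod.fst α ⊓ map (prod.lift (prod.fst ≫ prod.snd) prod.snd) (delta A) ≤ β ↔
      α ≤ map (prod.lift (𝟙 (X ⨯ A)) prod.snd) β
  ex : ∀ {A B : C}, (A ⟶ B) → obj A → obj B
  ex_adj : ∀ {A B : C} (f : A ⟶ B) (α : obj A) (β : obj B),
    ex f α ≤ β ↔ α ≤ map f β
  frobenius : ∀ {A B : C} (f : A ⟶ B) (α : obj B) (β : obj A),
    ex f (map f α ⊓ β) = α ⊓ ex f β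
  beck_chevalley : ∀ {A A' B : C} (f : A' ⟶ A) (β : obj (A ⨯ B)),
    ex prod.fst (map (prod.map f (𝟙 B)) β) = map f (ex prod.fst β)

namespace EED

variable {C : Type u} [Category.{v} C] [HasBinaryProducts C] (P : EED.{u, v, w} C)

/-- Relational composition `∃_{p₂}(P_{⟨p₁,p₂⟩}(θ) ∧ P_{⟨p₂,p₃⟩}(ζ))`. -/
noncomputable def comp {A B D : C} (θ : P.obj (A ⨯ B)) (ζ : P.obj (B ⨯ D)) : P.obj (A ⨯ D) :=
  P.ex (prod.lift (prod.fst ≫ prod.fst) prod.snd)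
    (P.map prod.fst θ ⊓ P.map (prod.lift (prod.fst ≫ prod.snd) prod.snd) ζ)

/-- Opposite relation `P_{⟨p₂,p₁⟩}(θ)`. -/
noncomputable def op {A B : C} (θ : P.obj (A ⨯ B)) : P.obj (B ⨯ A) :=
  P.map (prod.lift prod.snd prod.fst) θ

/-- `ρ ≤ P_{⟨p₂,p₁⟩}(ρ)`. -/
def SymmRel {A : C} (ρ : P.obj (A ⨯ A)) : Prop :=
  ρ ≤ P.map (prod.lift prod.snd prod.fst) ρ

/-- `P_{⟨p₁,p₂⟩}(ρ) ∧ P_{⟨p₂,p₃⟩}(ρ) ≤ P_{⟨p₁,p₃⟩}(ρ)` in `P((A×A)×A)`. -/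
def TransRel {A : C} (ρ : P.obj (A ⨯ A)) : Prop :=
  P.map prod.fst ρ ⊓ P.map (prod.lift (prod.fst ≫ prod.snd) prod.snd) ρ ≤
    P.map (prod.lift (prod.fst ≫ prod.fst) prod.snd) ρ

/-- `δ_A ≤ ρ`. -/
def ReflRel {A : C} (ρ : P.obj (A ⨯ A)) : Prop := P.delta A ≤ ρ

/-- A `P`-equivalence relation. -/
def EqRel {A : C} (ρ : P.obj (A ⨯ A)) : Prop :=
  P.ReflRel ρ ∧ P.SymmRel ρ ∧ P.TransRel ρ

/-- Conditions (i)–(v) for an arrow `φ : ⟨A,ρ⟩ → ⟨B,σ⟩` of the exact completion `T_P`. -/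
def IsArrow {A B : C} (ρ : P.obj (A ⨯ A)) (σ : P.obj (B ⨯ B)) (φ : P.obj (A ⨯ B)) : Prop :=
  (φ ≤ P.map (prod.lift prod.fst prod.fst) ρ ⊓ P.map (prod.lift prod.snd prod.snd) σ) ∧
  (P.map prod.fst ρ ⊓ P.map (prod.lift (prod.fst ≫ prod.snd) prod.snd) φ ≤
      P.map (prod.lift (prod.fst ≫ prod.fst) prod.snd) φ) ∧
  (P.map prod.fst φ ⊓ P.map (prod.lift (prod.fst ≫ prod.snd) prod.snd) σ ≤
      P.map (prod.lift (prod.fst ≫ prod.fst) prod.snd) φ) ∧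
  (P.map prod.fst φ ⊓ P.map (prod.lift (prod.fst ≫ prod.fst) prod.snd) φ ≤
      P.map (prod.lift (prod.fst ≫ prod.snd) prod.snd) σ) ∧
  (P.map (diag A) ρ ≤ P.ex prod.fst φ)

/-- The graph relation `L[f] = ∃_{p₂}(P_{⟨p₁,p₂⟩}(ρ) ∧ P_{⟨f∘p₂,p₃⟩}(σ))` in `P(A×B)`. -/
noncomputable def Lrel {A B : C} (f : A ⟶ B) (ρ : P.obj (A ⨯ A)) (σ : P.obj (B ⨯ B)) : P.obj (A ⨯ B) :=
  P.ex (prod.lift (prod.fst ≫ prod.fst) prod.snd)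
    (P.map prod.fst ρ ⊓ P.map (prod.lift (prod.fst ≫ prod.snd ≫ f) prod.snd) σ)

end EED

namespace EED

variable {C : Type u} [Category.{v} C] [HasBinaryProducts C] (P : EED.{u, v, w} C)

attribute [local simp] prod.lift_fst prod.lift_snd prod.lift_fst_assoc prod.lift_snd_assoc

theorem map_map {A B D : C} (f : A ⟶ B) (g : B ⟶ D) (x : P.obj D) :
    P.map f (P.map g x) = P.map (f ≫ g) x := (P.map_comp f g x).symm

theorem ex_mono {A B : C} (f : A ⟶ B) {x y : P.obj A} (h : x ≤ y) : P.ex f x ≤ P.ex f y :=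
  (P.ex_adj f x _).2 (h.trans ((P.ex_adj f y _).1 le_rfl))

theorem le_map_ex {A B : C} (f : A ⟶ B) (x : P.obj A) : x ≤ P.map f (P.ex f x) :=
  (P.ex_adj f x _).1 le_rfl

theorem ex_comp {A B D : C} (f : A ⟶ B) (g : B ⟶ D) (x : P.obj A) :
    P.ex (f ≫ g) x = P.ex g (P.ex f x) := by
  apply le_antisymm
  · rw [P.ex_adj, P.map_comp]
    exact (P.le_map_ex f x).trans (P.map_mono f (P.le_map_ex g (P.ex f x)))
  · rw [P.ex_adj, P.ex_adj, ← P.map_comp]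
    exact P.le_map_ex (f ≫ g) x
theorem ex_eq_map {A B : C} (f : A ⟶ B) (g : B ⟶ A) (hfg : f ≫ g = 𝟙 A)
    (hgf : g ≫ f = 𝟙 B) (x : P.obj A) : P.ex f x = P.map g x := by
  apply le_antisymm
  · rw [P.ex_adj, P.map_map, hfg, P.map_id]
  · have h := P.map_mono g (P.le_map_ex f x)
    rwa [P.map_map, hgf, P.map_id] at h

theorem bc' {A A' B : C} (f : A' ⟶ A) (β : P.obj (A ⨯ B)) :
    P.map f (P.ex prod.fst β) = P.ex prod.fst (P.map (prod.map f (𝟙 B)) β) :=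
  (P.beck_chevalley f β).symm

theorem frob' {A B : C} (f : A ⟶ B) (α : P.obj B) (β : P.obj A) :
    P.ex f (β ⊓ P.map f α) = P.ex f β ⊓ α := by
  rw [inf_comm β, P.frobenius, inf_comm]

/-- `comp` expressed as an `ex` along a product projection `(A ⨯ D) ⨯ B ⟶ A ⨯ D`. -/
theorem comp_eq {A B D : C} (θ : P.obj (A ⨯ B)) (ζ : P.obj (B ⨯ D)) :
    P.comp θ ζ = P.ex prod.fst
      (P.map (prod.lift (prod.fst ≫ prod.fst) prod.snd) θ ⊓
       P.map (prod.lift prod.snd (prod.fst ≫ prod.snd)) ζ) := by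
  have he : (prod.lift (prod.fst ≫ prod.fst) prod.snd : (A ⨯ B) ⨯ D ⟶ A ⨯ D) =
      (prod.lift (prod.lift (prod.fst ≫ prod.fst) prod.snd) (prod.fst ≫ prod.snd) :
        (A ⨯ B) ⨯ D ⟶ (A ⨯ D) ⨯ B) ≫ prod.fst := by simp
  rw [comp, he, P.ex_comp, P.ex_eq_map _
    (prod.lift (prod.lift (prod.fst ≫ prod.fst) prod.snd) (prod.fst ≫ prod.snd))
    (by ext <;> simp) (by ext <;> simp)]
  rw [P.map_inf, P.map_map, P.map_map]
  congr 2 <;> simp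

/-- `ρ` is the identity arrow on `⟨A, ρ⟩`. -/
theorem id_isArrow {A : C} (ρ : P.obj (A ⨯ A)) (hs : P.SymmRel ρ) (ht : P.TransRel ρ) :
    P.IsArrow ρ ρ ρ := by
  refine ⟨le_inf ?_ ?_, ht, ht, ?_, ?_⟩
  · have key := P.map_mono (prod.lift (𝟙 (A ⨯ A)) prod.fst) ht
    rw [P.map_inf, P.map_map, P.map_map, P.map_map] at key
    simp only [prod.comp_lift, Category.assoc, prod.lift_fst, prod.lift_snd,
      prod.lift_fst_assoc, prod.lift_snd_assoc, Category.comp_id, Category.id_comp,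
      P.map_id, prod.lift_fst_snd] at key
    exact (le_inf le_rfl hs).trans key
  · have key := P.map_mono (prod.lift (prod.lift prod.snd prod.fst) prod.snd) ht
    rw [P.map_inf, P.map_map, P.map_map, P.map_map] at key
    simp only [prod.comp_lift, Category.assoc, prod.lift_fst, prod.lift_snd,
      prod.lift_fst_assoc, prod.lift_snd_assoc, Category.comp_id, Category.id_comp,
      P.map_id, prod.lift_fst_snd] at key
    exact (le_inf hs le_rfl).trans key
  · have key := P.map_mono
      (prod.lift (prod.lift (prod.fst ≫ prod.snd) (prod.fst ≫ prod.fst)) prod.snd) ht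
    rw [P.map_inf, P.map_map, P.map_map, P.map_map] at key
    simp only [prod.comp_lift, Category.assoc, prod.lift_fst, prod.lift_snd,
      prod.lift_fst_assoc, prod.lift_snd_assoc, Category.comp_id, Category.id_comp,
      P.map_id, prod.lift_fst_snd] at key
    refine le_trans (le_inf ?_ inf_le_right) key
    have h2 := P.map_mono (prod.fst : (A ⨯ A) ⨯ A ⟶ A ⨯ A) hs
    rw [P.map_map] at h2
    simpa only [prod.comp_lift] using inf_le_left.trans h2
  · have h := P.map_mono (diag A) (P.le_map_ex prod.fst ρ)
    rw [P.map_map] at h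
    simpa [P.map_id] using h

theorem comp_isArrow {A B D : C} {ρ : P.obj (A ⨯ A)} {σ : P.obj (B ⨯ B)} {τ : P.obj (D ⨯ D)}
    (hσs : P.SymmRel σ) {φ : P.obj (A ⨯ B)} {ψ : P.obj (B ⨯ D)}
    (hφ : P.IsArrow ρ σ φ) (hψ : P.IsArrow σ τ ψ) : P.IsArrow ρ τ (P.comp φ ψ) := by
  obtain ⟨hφ1, hφ2, hφ3, hφ4, hφ5⟩ := hφ
  obtain ⟨hψ1, hψ2, hψ3, hψ4, hψ5⟩ := hψ
  refine ⟨?_, ?_, ?_, ?_, ?_⟩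
  · -- (i)
    rw [P.comp_eq, P.ex_adj, P.map_inf, P.map_map, P.map_map]
    refine le_inf (inf_le_left.trans ?_) (inf_le_right.trans ?_)
    · have h := P.map_mono (prod.lift (prod.fst ≫ prod.fst) prod.snd :
        (A ⨯ D) ⨯ B ⟶ A ⨯ B) hφ1
      rw [P.map_inf, P.map_map, P.map_map] at h
      refine (h.trans inf_le_left).trans (le_of_eq ?_)
      congr 1
      ext <;> simp
    · have h := P.map_mono (prod.lift prod.snd (prod.fst ≫ prod.snd) :
        (A ⨯ D) ⨯ B ⟶ B ⨯ D) hψ1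
      rw [P.map_inf, P.map_map, P.map_map] at h
      refine (h.trans inf_le_right).trans (le_of_eq ?_)
      congr 1
      ext <;> simp
  · -- (ii)
    rw [P.comp_eq, P.bc', P.bc', ← P.frobenius]
    refine P.ex_mono _ ?_
    rw [P.map_map, P.map_inf, P.map_inf, P.map_map, P.map_map, P.map_map, P.map_map]
    simp only [prod.comp_lift, Category.assoc, prod.lift_fst, prod.lift_snd,
      prod.lift_fst_assoc, prod.lift_snd_assoc, Category.comp_id, Category.id_comp,
      prod.lift_map, prod.map_fst, prod.map_snd, prod.map_fst_assoc, prod.map_snd_assoc, prod.lift_map_assoc, prod.lift_fst_snd]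
    refine le_inf ?_ (inf_le_right.trans inf_le_right)
    have key := P.map_mono (prod.lift (prod.fst ≫ prod.fst) prod.snd :
      ((A ⨯ A) ⨯ D) ⨯ B ⟶ (A ⨯ A) ⨯ B) hφ2
    rw [P.map_inf, P.map_map, P.map_map, P.map_map] at key
    simp only [prod.comp_lift, Category.assoc, prod.lift_fst, prod.lift_snd,
      prod.lift_fst_assoc, prod.lift_snd_assoc, Category.comp_id, Category.id_comp,
      prod.lift_map, prod.map_fst, prod.map_snd, prod.map_fst_assoc, prod.map_snd_assoc, prod.lift_map_assoc, prod.lift_fst_snd] at key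
    exact (le_inf inf_le_left (inf_le_right.trans inf_le_left)).trans key
  · -- (iii)
    rw [P.comp_eq, P.bc', P.bc', ← P.frob']
    refine P.ex_mono _ ?_
    rw [P.map_map, P.map_inf, P.map_inf, P.map_map, P.map_map, P.map_map, P.map_map]
    simp only [prod.comp_lift, Category.assoc, prod.lift_fst, prod.lift_snd,
      prod.lift_fst_assoc, prod.lift_snd_assoc, Category.comp_id, Category.id_comp,
      prod.lift_map, prod.map_fst, prod.map_snd, prod.map_fst_assoc, prod.map_snd_assoc, prod.lift_map_assoc, prod.lift_fst_snd]
    refine le_inf (inf_le_left.trans inf_le_left) ?_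
    have key := P.map_mono (prod.lift (prod.lift prod.snd (prod.fst ≫ prod.fst ≫ prod.snd))
      (prod.fst ≫ prod.snd) : ((A ⨯ D) ⨯ D) ⨯ B ⟶ (B ⨯ D) ⨯ D) hψ3
    rw [P.map_inf, P.map_map, P.map_map, P.map_map] at key
    simp only [prod.comp_lift, Category.assoc, prod.lift_fst, prod.lift_snd,
      prod.lift_fst_assoc, prod.lift_snd_assoc, Category.comp_id, Category.id_comp,
      prod.lift_map, prod.map_fst, prod.map_snd, prod.map_fst_assoc, prod.map_snd_assoc, prod.lift_map_assoc, prod.lift_fst_snd] at key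
    exact (le_inf (inf_le_left.trans inf_le_right) inf_le_right).trans key
  · -- (iv)
    rw [P.comp_eq, P.bc', P.bc', ← P.frobenius, P.ex_adj, P.bc', inf_comm,
      ← P.frobenius, P.ex_adj]
    simp only [P.map_inf, P.map_map]
    simp only [prod.comp_lift, Category.assoc, prod.lift_fst, prod.lift_snd,
      prod.lift_fst_assoc, prod.lift_snd_assoc, Category.comp_id, Category.id_comp,
      prod.lift_map, prod.map_fst, prod.map_snd, prod.map_fst_assoc, prod.map_snd_assoc, prod.lift_map_assoc, prod.lift_fst_snd]
    have key1 := P.map_mono (prod.lift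
      (prod.lift (prod.fst ≫ prod.fst ≫ prod.fst ≫ prod.fst) prod.snd) (prod.fst ≫ prod.snd) :
      (((A ⨯ D) ⨯ D) ⨯ B) ⨯ B ⟶ (A ⨯ B) ⨯ B) hφ4
    have key2 := P.map_mono (prod.lift prod.snd (prod.fst ≫ prod.snd) :
      (((A ⨯ D) ⨯ D) ⨯ B) ⨯ B ⟶ B ⨯ B) hσs
    have key3 := P.map_mono (prod.lift (prod.lift (prod.fst ≫ prod.snd) prod.snd)
      (prod.fst ≫ prod.fst ≫ prod.fst ≫ prod.snd) :
      (((A ⨯ D) ⨯ D) ⨯ B) ⨯ B ⟶ (B ⨯ B) ⨯ D) hψ2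
    have key4 := P.map_mono (prod.lift
      (prod.lift (prod.fst ≫ prod.snd) (prod.fst ≫ prod.fst ≫ prod.fst ≫ prod.snd))
      (prod.fst ≫ prod.fst ≫ prod.snd) :
      (((A ⨯ D) ⨯ D) ⨯ B) ⨯ B ⟶ (B ⨯ D) ⨯ D) hψ4
    simp only [P.map_inf, P.map_map, prod.comp_lift, Category.assoc, prod.lift_fst, prod.lift_snd,
      prod.lift_fst_assoc, prod.lift_snd_assoc, Category.comp_id, Category.id_comp,
      prod.lift_map, prod.map_fst, prod.map_snd, prod.map_fst_assoc, prod.map_snd_assoc, prod.lift_map_assoc, prod.lift_fst_snd] at key1 key2 key3 key4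
    refine le_trans (le_inf ?_ (inf_le_left.trans inf_le_right)) key4
    refine le_trans (le_inf ?_ (inf_le_right.trans inf_le_right)) key3
    exact le_trans (le_trans (le_inf (inf_le_right.trans inf_le_left)
      (inf_le_left.trans inf_le_left)) key1) key2
  · -- (v)
    have harr : (prod.lift (prod.fst ≫ prod.snd) prod.snd : (A ⨯ B) ⨯ D ⟶ B ⨯ D) =
        prod.map prod.snd (𝟙 D) := by ext <;> simp
    have hv : P.ex prod.fst (P.comp φ ψ) =
        P.ex prod.fst (φ ⊓ P.map prod.snd (P.ex prod.fst ψ)) := by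
      rw [comp, ← P.ex_comp]
      have he : (prod.lift (prod.fst ≫ prod.fst) prod.snd : (A ⨯ B) ⨯ D ⟶ A ⨯ D) ≫
          prod.fst = prod.fst ≫ prod.fst := by simp
      rw [he, P.ex_comp, harr, P.frobenius, P.beck_chevalley]
    rw [hv]
    refine hφ5.trans (P.ex_mono _ (le_inf le_rfl ?_))
    have h1 : φ ≤ P.map prod.snd (P.map (diag B) σ) := by
      rw [P.map_map, show (prod.snd : A ⨯ B ⟶ B) ≫ diag B = prod.lift prod.snd prod.snd
        from by ext <;> simp]
      exact hφ1.trans inf_le_right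
    exact h1.trans (P.map_mono _ hψ5)

theorem comp_assoc {A B D E : C} (φ : P.obj (A ⨯ B)) (ψ : P.obj (B ⨯ D)) (χ : P.obj (D ⨯ E)) :
    P.comp (P.comp φ ψ) χ = P.comp φ (P.comp ψ χ) := by
  rw [P.comp_eq (P.comp φ ψ) χ, P.comp_eq φ ψ, P.comp_eq φ (P.comp ψ χ), P.comp_eq ψ χ,
    P.bc', P.bc', ← P.frob', ← P.frobenius, ← P.ex_comp, ← P.ex_comp]
  conv_lhs => rw [show (prod.fst ≫ prod.fst : ((A ⨯ E) ⨯ D) ⨯ B ⟶ A ⨯ E) =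
    (prod.lift (prod.lift (prod.fst ≫ prod.fst) prod.snd) (prod.fst ≫ prod.snd) :
      ((A ⨯ E) ⨯ D) ⨯ B ⟶ ((A ⨯ E) ⨯ B) ⨯ D) ≫ (prod.fst ≫ prod.fst) from by simp]
  rw [P.ex_comp, P.ex_eq_map _
    (prod.lift (prod.lift (prod.fst ≫ prod.fst) prod.snd) (prod.fst ≫ prod.snd) :
      ((A ⨯ E) ⨯ B) ⨯ D ⟶ ((A ⨯ E) ⨯ D) ⨯ B) (by ext <;> simp) (by ext <;> simp)]
  congr 1
  simp only [P.map_inf, P.map_map, prod.comp_lift, Category.assoc, prod.lift_fst,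
    prod.lift_snd, prod.lift_fst_assoc, prod.lift_snd_assoc, Category.comp_id,
    Category.id_comp, prod.lift_map, prod.map_fst, prod.map_snd, prod.map_fst_assoc,
    prod.map_snd_assoc, prod.lift_map_assoc, prod.lift_fst_snd]
  rw [inf_assoc]

end EED

/-- the data of the exact completion `T_P` form a category:
composition of arrows is a well-defined arrow, composition is associative, and
`ρ` itself satisfies the arrow conditions for the identity on `⟨A,ρ⟩`. -/
theorem exact_completion_is_category
    {C : Type u} [Category.{v} C] [HasBinaryProducts C] (P : EED.{u, v, w} C)
    {A B D E : C}
    (ρ : P.obj (A ⨯ A)) (σ : P.obj (B ⨯ B)) (τ : P.obj (D ⨯ D)) (υ : P.obj (E ⨯ E))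
    (hρ : P.SymmRel ρ ∧ P.TransRel ρ) (hσ : P.SymmRel σ ∧ P.TransRel σ)
    (hτ : P.SymmRel τ ∧ P.TransRel τ) (hυ : P.SymmRel υ ∧ P.TransRel υ)
    (φ : P.obj (A ⨯ B)) (ψ : P.obj (B ⨯ D)) (χ : P.obj (D ⨯ E))
    (hφ : P.IsArrow ρ σ φ) (hψ : P.IsArrow σ τ ψ) (hχ : P.IsArrow τ υ χ) :
    P.IsArrow ρ τ (P.comp φ ψ) ∧
    P.comp (P.comp φ ψ) χ = P.comp φ (P.comp ψ χ) ∧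
    P.IsArrow ρ ρ ρ :=
  ⟨P.comp_isArrow hσ.1 hφ hψ, P.comp_assoc φ ψ χ, P.id_isArrow ρ hρ.1 hρ.2⟩
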